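/- Let n ≥ 1, 0 < β < n, 1 < p₁ < n/β and 1/p₂ = 1/p₁ − β/n. There is a constant C, depending only on n, β and p₁, such that for all integers j, k with k ≥ j + 2 and every f ∈ L^{p₁}(ℝⁿ) supported in the closed ball B_j = {x : |x| ≤ 2^j}, one has ‖(I^β f) · χ_{F_k}‖_{L^{p₂}} ≤ C · 2^{(β − n(1 − 1/p₂))(k − j)} ‖f‖_{L^{p₁}}. -/

import Mathlib

open MeasureTheory
open scoped ENNReal

/-- The Riesz potential `I^β f (x) = ∫ f(y) ‖x - y‖^(β - n) dy` on `ℝⁿ`. -/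
noncomputable def rieszPot (n : ℕ) (β : ℝ) (f : EuclideanSpace ℝ (Fin n) → ℝ)
    (x : EuclideanSpace ℝ (Fin n)) : ℝ :=
  ∫ y, f y * ‖x - y‖ ^ (β - (n : ℝ))

/-- The dyadic annulus `F_k = B_k \ B_{k-1}`, where `B_k` is the closed ball of
radius `2^k` centred at the origin. -/
def annulus (n : ℕ) (k : ℤ) : Set (EuclideanSpace ℝ (Fin n)) :=
  Metric.closedBall 0 ((2 : ℝ) ^ k) \ Metric.closedBall 0 ((2 : ℝ) ^ (k - 1))

/-- for `f ∈ L^{p₁}` supported in `B_j` and `k ≥ j + 2`, one has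
`‖(I^β f)·χ_{F_k}‖_{L^{p₂}} ≤ C 2^{(β - n(1 - 1/p₂))(k-j)} ‖f‖_{L^{p₁}}`. -/
theorem stmt_2 (n : ℕ) (hn : 1 ≤ n) (β p₁ p₂ : ℝ) (hβ0 : 0 < β) (hβn : β < n)
    (hp₁ : 1 < p₁) (hp₁n : p₁ < n / β) (hp₂ : 1 / p₂ = 1 / p₁ - β / n) :
    ∃ C : ℝ, 0 < C ∧ ∀ (j k : ℤ), j + 2 ≤ k →
      ∀ f : EuclideanSpace ℝ (Fin n) → ℝ,
        MemLp f (ENNReal.ofReal p₁) volume →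
        Function.support f ⊆ Metric.closedBall 0 ((2 : ℝ) ^ j) →
        eLpNorm ((annulus n k).indicator (rieszPot n β f)) (ENNReal.ofReal p₂) volume ≤
          ENNReal.ofReal
              (C * (2 : ℝ) ^ ((β - n * (1 - 1 / p₂)) * ((k : ℝ) - (j : ℝ)))) *
            eLpNorm f (ENNReal.ofReal p₁) volume := by
  classical
  set E := EuclideanSpace ℝ (Fin n)
  have hn0 : (0:ℝ) < n := by exact_mod_cast Nat.pos_of_ne_zero (by omega)
  have hp₁0 : (0:ℝ) < p₁ := one_pos.trans hp₁
  have h2p : 0 < 1 / p₂ := by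
    rw [hp₂, sub_pos, div_lt_div_iff₀ hn0 hp₁0]
    nlinarith [(lt_div_iff₀ hβ0).mp hp₁n]
  have hp₂0 : 0 < p₂ := one_div_pos.mp h2p
  set ν : ℝ≥0∞ := volume (Metric.ball (0 : E) 1) with hν
  have hν0 : ν ≠ 0 := by
    simpa [hν] using (Metric.measure_ball_pos volume (0:E) one_pos).ne'
  have hνtop : ν ≠ ⊤ := measure_ball_lt_top.ne
  have hνt : 0 < ν.toReal := ENNReal.toReal_pos hν0 hνtop
  set e₁ : ℝ := 1 - 1 / p₁ with he₁
  set e₂ : ℝ := 1 / p₂ with he₂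
  have hp₁inv : 1 / p₁ ≤ 1 := by rw [div_le_one hp₁0]; exact hp₁.le
  have he₁0 : 0 ≤ e₁ := by rw [he₁]; linarith
  refine ⟨(2:ℝ) ^ (2 * ((n:ℝ) - β)) * ν.toReal ^ (e₁ + e₂),
    mul_pos (Real.rpow_pos_of_pos two_pos _) (Real.rpow_pos_of_pos hνt _), ?_⟩
  intro j k hjk f hf hsupp
  set q₁ := ENNReal.ofReal p₁ with hq₁
  set q₂ := ENNReal.ofReal p₂ with hq₂
  have hq₁1 : 1 ≤ q₁ := by simpa [hq₁] using ENNReal.one_le_ofReal.mpr hp₁.le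
  have hq₂0 : q₂ ≠ 0 := by simp [hq₂, ENNReal.ofReal_eq_zero, not_le, hp₂0]
  have hq₂t : q₂.toReal = p₂ := ENNReal.toReal_ofReal hp₂0.le
  have hq₁t : q₁.toReal = p₁ := ENNReal.toReal_ofReal hp₁0.le
  set Bj := Metric.closedBall (0 : E) ((2:ℝ) ^ j) with hBj
  have hBjm : MeasurableSet Bj := measurableSet_closedBall
  -- integrability of f
  haveI : Fact (volume Bj < ⊤) := ⟨measure_closedBall_lt_top⟩
  have hint : Integrable f volume := by
    have h1 : IntegrableOn f Bj volume := (hf.restrict Bj).integrable hq₁1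
    have := h1.integrable_indicator hBjm
    rwa [Set.indicator_eq_self.mpr hsupp] at this
  set K : ℝ := (2:ℝ) ^ (((k:ℝ) - 2) * (β - n)) with hK
  have hK0 : 0 ≤ K := (Real.rpow_pos_of_pos two_pos _).le
  set M : ℝ := K * ∫ y, ‖f y‖ with hM
  have hM0 : 0 ≤ M := mul_nonneg hK0 (integral_nonneg fun y => norm_nonneg _)
  -- pointwise bound
  have hpt : ∀ x, ‖(annulus n k).indicator (rieszPot n β f) x‖ ≤
      ‖(annulus n k).indicator (fun _ => M) x‖ := by
    intro x
    by_cases hx : x ∈ annulus n k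
    · rw [Set.indicator_of_mem hx, Set.indicator_of_mem hx, Real.norm_of_nonneg hM0]
      have hxlb : (2:ℝ) ^ (k-1 : ℤ) < ‖x‖ := by
        have := hx.2
        simp only [Metric.mem_closedBall, dist_zero_right, not_le] at this
        exact this
      have hbd : ∀ y, ‖f y * ‖x - y‖ ^ (β - (n:ℝ))‖ ≤ K * ‖f y‖ := by
        intro y
        by_cases hy : f y = 0
        · simp [hy, hK0]
        · have hyB : ‖y‖ ≤ (2:ℝ) ^ j := by
            have := hsupp (Function.mem_support.mpr hy)
            simpa [hBj, Metric.mem_closedBall, dist_zero_right] using this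
          have h2 : (2:ℝ) ^ (k-2 : ℤ) ≤ ‖x - y‖ := by
            have h3 : ‖x‖ - ‖y‖ ≤ ‖x - y‖ := norm_sub_norm_le x y
            have h4 : (2:ℝ) ^ j ≤ (2:ℝ) ^ (k-2 : ℤ) :=
              zpow_le_zpow_right₀ one_le_two (by omega)
            have h5 : (2:ℝ) ^ (k-1 : ℤ) = 2 * (2:ℝ) ^ (k-2 : ℤ) := by
              rw [← zpow_one_add₀ (two_ne_zero)]; ring_nf
            nlinarith
          have h6 : (0:ℝ) < (2:ℝ) ^ (k-2 : ℤ) := zpow_pos two_pos _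
          have h7 : ‖x - y‖ ^ (β - (n:ℝ)) ≤ ((2:ℝ) ^ (k-2 : ℤ)) ^ (β - (n:ℝ)) :=
            Real.rpow_le_rpow_of_nonpos h6 h2 (by linarith)
          have h8 : ((2:ℝ) ^ (k-2 : ℤ)) ^ (β - (n:ℝ)) = K := by
            rw [hK, ← Real.rpow_intCast 2 (k-2), ← Real.rpow_mul (by norm_num)]
            push_cast; ring_nf
          rw [norm_mul, Real.norm_of_nonneg (Real.rpow_nonneg (norm_nonneg _) _)]
          calc ‖f y‖ * ‖x - y‖ ^ (β - (n:ℝ)) ≤ ‖f y‖ * K := by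
                apply mul_le_mul_of_nonneg_left _ (norm_nonneg _)
                rw [← h8]; exact h7
            _ = K * ‖f y‖ := mul_comm _ _
      calc ‖rieszPot n β f x‖ ≤ ∫ y, K * ‖f y‖ :=
            norm_integral_le_of_norm_le (hint.norm.const_mul K) (.of_forall hbd)
        _ = M := by rw [hM, integral_const_mul]
    · simp [Set.indicator_of_notMem hx]
  -- volume facts
  have hfr : Module.finrank ℝ E = n := finrank_euclideanSpace_fin
  have hvol : ∀ m : ℤ, volume (Metric.closedBall (0:E) ((2:ℝ)^m)) =
      ENNReal.ofReal (((2:ℝ)^m) ^ n) * ν := by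
    intro m
    rw [Measure.addHaar_closedBall _ _ (zpow_pos two_pos m).le, hfr]
  -- main chain
  have step1 : eLpNorm ((annulus n k).indicator (rieszPot n β f)) q₂ volume ≤
      ENNReal.ofReal M * volume (annulus n k) ^ (1 / p₂) := by
    have hannm : MeasurableSet (annulus n k) := by
      unfold annulus; exact measurableSet_closedBall.diff measurableSet_closedBall
    refine (eLpNorm_mono hpt).trans ?_
    rw [eLpNorm_indicator_const hannm hq₂0 ENNReal.ofReal_ne_top, hq₂t,
      Real.enorm_eq_ofReal hM0]
  have step2 : ENNReal.ofReal M ≤ ENNReal.ofReal K * (eLpNorm f q₁ volume *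
      (volume Bj) ^ e₁) := by
    rw [hM, ENNReal.ofReal_mul hK0,
      ofReal_integral_norm_eq_lintegral_enorm hint, ← eLpNorm_one_eq_lintegral_enorm]
    refine mul_le_mul_right ?_ _
    calc eLpNorm f 1 volume
        = eLpNorm (Bj.indicator f) 1 volume := by rw [Set.indicator_eq_self.mpr hsupp]
      _ = eLpNorm f 1 (volume.restrict Bj) := eLpNorm_indicator_eq_eLpNorm_restrict hBjm
      _ ≤ eLpNorm f q₁ (volume.restrict Bj) * (volume.restrict Bj) Set.univ ^
            (1 / (1:ℝ≥0∞).toReal - 1 / q₁.toReal) :=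
          eLpNorm_le_eLpNorm_mul_rpow_measure_univ hq₁1
            (hf.aestronglyMeasurable.restrict)
      _ ≤ eLpNorm f q₁ volume * (volume Bj) ^ e₁ := by
          rw [Measure.restrict_apply_univ]
          have hexp : 1 / (1:ℝ≥0∞).toReal - 1 / q₁.toReal = e₁ := by
            rw [ENNReal.toReal_one, hq₁t, he₁]; norm_num
          rw [hexp]
          exact mul_le_mul_left (eLpNorm_mono_measure f Measure.restrict_le_self) _
  have hannle : volume (annulus n k) ≤ ENNReal.ofReal (((2:ℝ)^k) ^ n) * ν := by
    rw [← hvol k]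
    exact measure_mono Set.diff_subset
  -- combine
  have main : eLpNorm ((annulus n k).indicator (rieszPot n β f)) q₂ volume ≤
      (ENNReal.ofReal K * (ENNReal.ofReal (((2:ℝ)^j) ^ n) * ν) ^ e₁ *
        (ENNReal.ofReal (((2:ℝ)^k) ^ n) * ν) ^ e₂) * eLpNorm f q₁ volume := by
    refine step1.trans ?_
    calc ENNReal.ofReal M * volume (annulus n k) ^ (1 / p₂)
        ≤ (ENNReal.ofReal K * (eLpNorm f q₁ volume * (volume Bj) ^ e₁)) *
            (ENNReal.ofReal (((2:ℝ)^k) ^ n) * ν) ^ e₂ :=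
          mul_le_mul step2 (ENNReal.rpow_le_rpow hannle h2p.le) zero_le zero_le
      _ = _ := by rw [hvol j]; ring
  refine main.trans ?_
  gcongr
  -- final constant computation
  have hofr : ∀ (a : ℝ), 0 < a → ∀ e : ℝ, (ENNReal.ofReal a) ^ e = ENNReal.ofReal (a ^ e) :=
    fun a ha e => ENNReal.ofReal_rpow_of_pos ha
  have hν' : ν = ENNReal.ofReal ν.toReal := (ENNReal.ofReal_toReal hνtop).symm
  have hb : ∀ m : ℤ, (0:ℝ) < ((2:ℝ)^m) ^ n := fun m => pow_pos (zpow_pos two_pos m) n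
  rw [ENNReal.mul_rpow_of_nonneg _ _ he₁0, ENNReal.mul_rpow_of_nonneg _ _ h2p.le,
    hofr _ (hb j) e₁, hofr _ (hb k) e₂, hν', hofr _ hνt e₁, hofr _ hνt e₂,
    ← ENNReal.ofReal_mul (by positivity), ← ENNReal.ofReal_mul (by positivity),
    ← ENNReal.ofReal_mul (by positivity), ← ENNReal.ofReal_mul (by positivity)]
  refine ENNReal.ofReal_le_ofReal (le_of_eq ?_)
  -- pure real computation
  have h2j : ((2:ℝ)^(j:ℤ)) ^ n = (2:ℝ) ^ ((j:ℝ) * n) := by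
    rw [← Real.rpow_intCast 2 j, ← Real.rpow_natCast ((2:ℝ) ^ ((j:ℝ))) n,
      ← Real.rpow_mul (by norm_num)]
  have h2k : ((2:ℝ)^(k:ℤ)) ^ n = (2:ℝ) ^ ((k:ℝ) * n) := by
    rw [← Real.rpow_intCast 2 k, ← Real.rpow_natCast ((2:ℝ) ^ ((k:ℝ))) n,
      ← Real.rpow_mul (by norm_num)]
  have hnne : (n:ℝ) ≠ 0 := hn0.ne'
  have hp₁ne : p₁ ≠ 0 := hp₁0.ne'
  rw [ENNReal.toReal_ofReal hνt.le, h2j, h2k,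
    ← Real.rpow_mul (by norm_num : (0:ℝ) ≤ 2),
    ← Real.rpow_mul (by norm_num : (0:ℝ) ≤ 2),
    Real.rpow_add hνt e₁ e₂, hK]
  have hcomb : ∀ a b c : ℝ, (2:ℝ)^a * ((2:ℝ)^b * ν.toReal^e₁) * ((2:ℝ)^c * ν.toReal^e₂)
      = (2:ℝ)^(a+b+c) * (ν.toReal^e₁ * ν.toReal^e₂) := by
    intro a b c
    rw [Real.rpow_add two_pos, Real.rpow_add two_pos]; ring
  have hcomb2 : (2:ℝ)^(2*((n:ℝ)-β)) * (ν.toReal^e₁ * ν.toReal^e₂) *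
        (2:ℝ)^((β-(n:ℝ)*(1-e₂))*((k:ℝ)-(j:ℝ)))
      = (2:ℝ)^(2*((n:ℝ)-β) + (β-(n:ℝ)*(1-e₂))*((k:ℝ)-(j:ℝ))) *
        (ν.toReal^e₁ * ν.toReal^e₂) := by
    rw [Real.rpow_add two_pos]; ring
  rw [hcomb, hcomb2]
  congr 2
  rw [he₁, hp₂]
  field_simp
  ring
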